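/- (One-sparse measurement: one-step trace recursion.) Let Σ be a real symmetric positive semidefinite n×n matrix, σ > 0, γ > 0, and ρ ∈ [0, 1). Let j be an index maximizing the diagonal entries of Σ, with d = Σ_{jj} > 0. Assume Σ_{ij}² ≥ ρ·Σ_{ii}·Σ_{jj} for every index i, and let the power β satisfy β ≥ σ²/(γ·d). Then the one-sparse update Σ′ = Σ − β·Σ e_j e_jᵀ Σ/(β·Σ_{jj} + σ²), where e_j is the j-th standard basis vector, satisfies tr(Σ′) ≤ [ 1 − ((n−1)ρ + 1)/(n(1+γ)) ]·tr(Σ). -/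

import Mathlib

open MeasureTheory ProbabilityTheory Matrix BigOperators

/-- Spectral (ℓ²-operator) norm of a real square matrix. -/
noncomputable def specNorm {n : ℕ} (A : Matrix (Fin n) (Fin n) ℝ) : ℝ :=
  ‖LinearMap.toContinuousLinearMap (Matrix.toEuclideanLin A)‖

/-- One-sparse measurement: one-step trace recursion. -/
theorem stmt16 {n : ℕ} (S : Matrix (Fin n) (Fin n) ℝ) (hS : S.PosSemidef)
    (σ γ ρ : ℝ) (hσ : 0 < σ) (hγ : 0 < γ) (hρ : ρ ∈ Set.Ico (0 : ℝ) 1)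
    (j : Fin n) (hj : ∀ i, S i i ≤ S j j) (d : ℝ) (hd : d = S j j) (hdpos : 0 < d)
    (hcorr : ∀ i, ρ * (S i i * S j j) ≤ (S i j) ^ 2)
    (β : ℝ) (hβ : β ≥ σ ^ 2 / (γ * d))
    (S' : Matrix (Fin n) (Fin n) ℝ)
    (hS' : S' = S - (β / (β * S j j + σ ^ 2)) •
      Matrix.vecMulVec (S.mulVec (Pi.single j 1)) ((Pi.single j 1 : Fin n → ℝ) ᵥ* S)) :
    S'.trace ≤ (1 - ((n - 1) * ρ + 1) / (n * (1 + γ))) * S.trace := by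
  obtain ⟨hρ0, hρ1⟩ := hρ
  have hn : 1 ≤ n := Fin.pos j
  have hn' : (1 : ℝ) ≤ (n : ℝ) := by exact_mod_cast hn
  -- diagonal entries are nonnegative
  have hdiag : ∀ i, 0 ≤ S i i := by
    intro i
    exact hS.diag_nonneg
  -- symmetry
  have hsym : ∀ i, S j i = S i j := by
    intro i
    simpa using (congrFun (congrFun hS.1 j) i).symm
  set t : ℝ := S.trace with ht
  have htsum : t = ∑ i, S i i := by simp [ht, Matrix.trace, Matrix.diag]
  -- positivity facts
  have hβpos : 0 < β := lt_of_lt_of_le (by positivity) hβ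
  have hden : 0 < β * d + σ ^ 2 := by positivity
  set c : ℝ := β / (β * S j j + σ ^ 2) with hc
  have hcd : c = β / (β * d + σ ^ 2) := by rw [hc, hd]
  have hcpos : 0 < c := by rw [hcd]; positivity
  set Q : ℝ := ∑ i, (S i j) ^ 2 with hQ
  -- trace of S'
  have htr : S'.trace = t - c * Q := by
    rw [hS']
    have : (Matrix.vecMulVec (S.mulVec (Pi.single j 1))
        ((Pi.single j 1 : Fin n → ℝ) ᵥ* S)).trace = Q := by
      simp only [Matrix.trace, Matrix.diag, Matrix.vecMulVec_apply, Matrix.mulVec_single,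
        Matrix.single_vecMul, mul_one, one_mul, hQ]
      exact Finset.sum_congr rfl fun i _ => by simp [hsym i, sq]
    rw [Matrix.trace_sub, Matrix.trace_smul, this]
    simp [ht, hc, smul_eq_mul]
  -- lower bound on Q
  have hQge : d ^ 2 + ρ * d * (t - d) ≤ Q := by
    have hsplit : Q = (S j j) ^ 2 + ∑ i ∈ Finset.univ.erase j, (S i j) ^ 2 := by
      rw [hQ, ← Finset.add_sum_erase _ _ (Finset.mem_univ j)]
    have hts : t - d = ∑ i ∈ Finset.univ.erase j, S i i := by
      rw [htsum, hd, ← Finset.add_sum_erase _ _ (Finset.mem_univ j)]; ring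
    have hbound : ∑ i ∈ Finset.univ.erase j, ρ * (S i i * d) ≤
        ∑ i ∈ Finset.univ.erase j, (S i j) ^ 2 := by
      apply Finset.sum_le_sum
      intro i _
      rw [hd]; exact hcorr i
    calc d ^ 2 + ρ * d * (t - d)
        = (S j j) ^ 2 + ∑ i ∈ Finset.univ.erase j, ρ * (S i i * d) := by
          rw [hts, Finset.mul_sum, hd]
          congr 1
          exact Finset.sum_congr rfl fun i _ => by ring
      _ ≤ (S j j) ^ 2 + ∑ i ∈ Finset.univ.erase j, (S i j) ^ 2 := by linarith
      _ = Q := hsplit.symm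
  -- t ≤ n * d and d ≤ t
  have htnd : t ≤ n * d := by
    rw [htsum]
    calc ∑ i, S i i ≤ ∑ _i : Fin n, d := Finset.sum_le_sum fun i _ => by rw [hd]; exact hj i
      _ = n * d := by simp [Finset.sum_const, mul_comm]
  have hdt : d ≤ t := by
    rw [htsum, hd, ← Finset.add_sum_erase _ _ (Finset.mem_univ j)]
    have : 0 ≤ ∑ i ∈ Finset.univ.erase j, S i i :=
      Finset.sum_nonneg fun i _ => hdiag i
    linarith
  -- c ≥ 1/((1+γ)d)
  have hγβ : σ ^ 2 ≤ γ * (β * d) := by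
    have h1 : σ ^ 2 / (γ * d) * (γ * d) ≤ β * (γ * d) := by
      apply mul_le_mul_of_nonneg_right hβ; positivity
    rw [div_mul_cancel₀] at h1
    · linarith [h1]
    · positivity
  have hclb : 1 / ((1 + γ) * d) ≤ c := by
    rw [hcd, div_le_div_iff₀ (by positivity) hden]
    nlinarith
  -- combine: c * Q ≥ (d + ρ*(t-d))/(1+γ)
  have hX : 0 ≤ d ^ 2 + ρ * d * (t - d) := by
    have h1 := mul_nonneg (mul_nonneg hρ0 hdpos.le) (sub_nonneg.2 hdt)
    nlinarith [sq_nonneg d]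
  have hcQ : (d + ρ * (t - d)) / (1 + γ) ≤ c * Q := by
    have h1 : (1 / ((1 + γ) * d)) * (d ^ 2 + ρ * d * (t - d)) ≤ c * Q := by
      apply mul_le_mul hclb hQge hX (le_of_lt hcpos)
    have h2 : (1 / ((1 + γ) * d)) * (d ^ 2 + ρ * d * (t - d)) = (d + ρ * (t - d)) / (1 + γ) := by
      field_simp
    linarith [h1, h2 ▸ h1]
  -- final inequality
  rw [htr]
  have h1γ : (0:ℝ) < 1 + γ := by linarith
  have hpos : (0 : ℝ) < (n:ℝ) * (1 + γ) := by positivity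
  have hkey : ((n:ℝ) - 1) * ρ + 1 ≤ 0 ∨ True := Or.inr trivial
  have hkey2 : (((n:ℝ) - 1) * ρ + 1) * t ≤ (n:ℝ) * (d + ρ * (t - d)) := by
    nlinarith [mul_nonneg (by linarith : (0:ℝ) ≤ 1 - ρ) (by linarith : (0:ℝ) ≤ (n:ℝ) * d - t)]
  have h3 : (((n:ℝ) - 1) * ρ + 1) / ((n:ℝ) * (1 + γ)) * t ≤ (d + ρ * (t - d)) / (1 + γ) := by
    rw [div_mul_eq_mul_div, div_le_div_iff₀ hpos h1γ]
    nlinarith [mul_le_mul_of_nonneg_right hkey2 h1γ.le]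
  have hexp : (1 - (((n:ℝ) - 1) * ρ + 1) / ((n:ℝ) * (1 + γ))) * t
      = t - (((n:ℝ) - 1) * ρ + 1) / ((n:ℝ) * (1 + γ)) * t := by ring
  rw [hexp]
  linarith [hcQ, h3]
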